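/- arXiv:1710.08084 — 2 statements merged into one kernel-verified Lean document; each statement's English description precedes it below -/
import Mathlib

section
/- Let V ⊂ ℝ^{n+1} be a proper convex cone, and let x₀ be in the interior of V and y₀ be in the interior of V* with ⟨x₀, y₀⟩ = −1. Then s_{x₀}(K_{y₀}) = s_{y₀}(T_{x₀}) = (1/(n!)²) · (∫_V e^{⟨x, y₀⟩} dx) · (∫_{V*} e^{⟨x₀, y⟩} dy), where K_{y₀} = {x ∈ V : ⟨x, y₀⟩ = −1} and T_{x₀} = {y ∈ V* : ⟨x₀, y⟩ = −1}. -/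
open MeasureTheory Set Pointwise

noncomputable section

abbrev Euc (d : ℕ) := EuclideanSpace ℝ (Fin d)

/-- The polar of a set in Euclidean space. -/
def polarSet {d : ℕ} (K : Set (Euc d)) : Set (Euc d) :=
  {y | ∀ x ∈ K, (inner ℝ x y : ℝ) ≤ 1}

/-- Mahler volume. -/
def mahlerVol {d : ℕ} (K : Set (Euc d)) : ℝ :=
  (volume K).toReal * (volume (polarSet K)).toReal

/-- Covariance matrix. -/
def covM {d : ℕ} (K : Set (Euc d)) : Matrix (Fin d) (Fin d) ℝ :=
  Matrix.of fun i j =>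
    (∫ x in K, x i * x j) / (volume K).toReal -
      ((∫ x in K, x i) / (volume K).toReal) * ((∫ x in K, x j) / (volume K).toReal)

/-- Isotropic constant. -/
def isoConst {d : ℕ} (K : Set (Euc d)) : ℝ :=
  ((covM K).det / (volume K).toReal ^ 2) ^ (1 / (2 * (d : ℝ)))

/-- Isotropic constant of the simplex. -/
def simplexIso (n : ℕ) : ℝ :=
  (n.factorial : ℝ) ^ ((n : ℝ)⁻¹) /
    (((n : ℝ) + 1) ^ (((n : ℝ) + 1) / (2 * (n : ℝ))) * Real.sqrt ((n : ℝ) + 2))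

/-- Barycenter. -/
def barycenterE {d : ℕ} (K : Set (Euc d)) : Euc d :=
  (volume K).toReal⁻¹ • ∫ x in K, x

def IsProperCone {d : ℕ} (V : Set (Euc d)) : Prop :=
  IsClosed V ∧ Convex ℝ V ∧ (∀ x ∈ V, ∀ t : ℝ, 0 ≤ t → t • x ∈ V) ∧
    (interior V).Nonempty ∧ ∀ x ∈ V, -x ∈ V → x = 0

def dualConeSet {d : ℕ} (V : Set (Euc d)) : Set (Euc d) :=
  {y | ∀ x ∈ V, (inner ℝ x y : ℝ) ≤ 0}

/-- log-Laplace transform. -/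
def logLaplace {d : ℕ} (V : Set (Euc d)) (y : Euc d) : ℝ :=
  Real.log (∫ x in V, Real.exp ((inner ℝ x y : ℝ)))

/-- Legendre transform of log-Laplace transform. -/
def legendreLL {d : ℕ} (V : Set (Euc d)) (x : Euc d) : ℝ :=
  sSup {z : ℝ | ∃ y ∈ interior (dualConeSet V), z = (inner ℝ x y : ℝ) - logLaplace V y}

def IsChart {d n : ℕ} (K : Set (Euc d)) (p : Euc d) (A : Euc d →ᵃ[ℝ] Euc n) : Prop :=
  Set.InjOn A (affineSpan ℝ K : Set (Euc d)) ∧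
    A '' (affineSpan ℝ K : Set (Euc d)) = Set.univ ∧ A p = 0

def sbarTo (n : ℕ) {d : ℕ} (K : Set (Euc d)) : ℝ :=
  sInf {s | ∃ p ∈ intrinsicInterior ℝ K, ∃ A : Euc d →ᵃ[ℝ] Euc n,
    IsChart K p A ∧ s = mahlerVol (A '' K)}

/-- barycenter w.r.t. Hausdorff measure. -/
def baryH (r : ℝ) {d : ℕ} (K : Set (Euc d)) : Euc d :=
  ((μH[r] K).toReal)⁻¹ • ∫ x in K, x ∂(μH[r])

def covH (r : ℝ) {d : ℕ} (K : Set (Euc d)) : Matrix (Fin d) (Fin d) ℝ :=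
  Matrix.of fun i j =>
    (∫ x in K, x i * x j ∂(μH[r])) / (μH[r] K).toReal - baryH r K i * baryH r K j

def hessM {d : ℕ} (f : Euc d → ℝ) (x : Euc d) : Matrix (Fin d) (Fin d) ℝ :=
  Matrix.of fun i j =>
    iteratedFDeriv ℝ 2 f x ![EuclideanSpace.single i 1, EuclideanSpace.single j 1]

def detMinors {d : ℕ} (A : Matrix (Fin (d + 1)) (Fin (d + 1)) ℝ) : ℝ :=
  ∑ i : Fin (d + 1), (A.submatrix (Fin.succAbove i) (Fin.succAbove i)).det

def isoH (n : ℕ) (K : Set (Euc (n + 1))) : ℝ :=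
  (detMinors (covH n K) / (μH[n] K).toReal ^ 2) ^ (1 / (2 * (n : ℝ)))

namespace CMtest
open scoped ENNReal NNReal

variable {n : ℕ}

-- from part1 (assumed): pr, inc, elast, lemmas

def pr (n : ℕ) : Euc (n+1) →ₗ[ℝ] Euc n where
  toFun z := WithLp.toLp 2 (fun j : Fin n => z j.castSucc)
  map_add' x y := rfl
  map_smul' c x := rfl
def inc (n : ℕ) : Euc n →ₗ[ℝ] Euc (n+1) where
  toFun u := WithLp.toLp 2 (fun i : Fin (n+1) => Fin.lastCases (motive := fun _ => ℝ) 0 (fun j => u j) i)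
  map_add' x y := by
    ext i
    induction i using Fin.lastCases <;> simp [PiLp.add_apply]
  map_smul' c x := by
    ext i
    induction i using Fin.lastCases <;> simp [PiLp.smul_apply]
def elast (n : ℕ) : Euc (n+1) := EuclideanSpace.single (Fin.last n) 1
@[simp] lemma pr_apply (z : Euc (n+1)) (j : Fin n) : pr n z j = z j.castSucc := rfl
@[simp] lemma inc_apply_cast (u : Euc n) (j : Fin n) : inc n u j.castSucc = u j := by simp [inc]
@[simp] lemma inc_apply_last (u : Euc n) : inc n u (Fin.last n) = 0 := by simp [inc]
@[simp] lemma pr_inc (u : Euc n) : pr n (inc n u) = u := by ext j; simp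
@[simp] lemma elast_last : elast n (Fin.last n) = 1 := by
  simp [elast, EuclideanSpace.single_apply]
@[simp] lemma elast_cast (j : Fin n) : elast n j.castSucc = 0 := by
  simp [elast, EuclideanSpace.single_apply, Fin.ext_iff]; omega
@[simp] lemma pr_elast : pr n (elast n) = 0 := by ext j; simp
lemma decomp (z : Euc (n+1)) : z = inc n (pr n z) + (z (Fin.last n)) • elast n := by
  ext i
  induction i using Fin.lastCases <;> simp [PiLp.add_apply, PiLp.smul_apply]
lemma inner_split (z z' : Euc (n+1)) :
    (inner ℝ z z' : ℝ) = (inner ℝ (pr n z) (pr n z') : ℝ) + z (Fin.last n) * z' (Fin.last n) := by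
  simp only [PiLp.inner_apply, RCLike.inner_apply, starRingEnd_apply, star_trivial]
  rw [Fin.sum_univ_castSucc]; simp only [pr_apply]; ring
lemma inner_elast_left (z : Euc (n+1)) : (inner ℝ (elast n) z : ℝ) = z (Fin.last n) := by
  rw [inner_split]; simp
lemma inner_elast_right (z : Euc (n+1)) : (inner ℝ z (elast n) : ℝ) = z (Fin.last n) := by
  rw [real_inner_comm, inner_elast_left]

-- new stuff
def lastL (n : ℕ) : Euc (n+1) →ₗ[ℝ] ℝ where
  toFun z := z (Fin.last n)
  map_add' x y := rfl
  map_smul' c x := rfl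

@[simp] lemma lastL_apply (z : Euc (n+1)) : lastL n z = z (Fin.last n) := rfl

def reflL (n : ℕ) : Euc (n+1) →ₗ[ℝ] Euc (n+1) :=
  LinearMap.id - (2:ℝ) • (lastL n).smulRight (elast n)

lemma reflL_apply (z : Euc (n+1)) : reflL n z = z - (2 * z (Fin.last n)) • elast n := by
  simp [reflL, two_smul, add_smul, mul_smul]

lemma reflL_coord (z : Euc (n+1)) (i : Fin (n+1)) :
    reflL n z i = if i = Fin.last n then -(z (Fin.last n)) else z i := by
  rw [reflL_apply]
  rcases eq_or_ne i (Fin.last n) with rfl | hi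
  · simp [PiLp.sub_apply, PiLp.smul_apply]; ring
  · have : elast n i = 0 := by
      obtain ⟨j, rfl⟩ := Fin.exists_castSucc_eq.2 hi
      simp
    simp [PiLp.sub_apply, PiLp.smul_apply, this, hi]

lemma inner_reflL (z z' : Euc (n+1)) :
    (inner ℝ z (reflL n z') : ℝ)
      = (inner ℝ (pr n z) (pr n z') : ℝ) - z (Fin.last n) * z' (Fin.last n) := by
  rw [reflL_apply, inner_sub_right, real_inner_smul_right, inner_elast_right,
    inner_split z z']
  ring

lemma reflL_involutive : Function.Involutive (reflL n) := by
  intro z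
  ext i
  rw [reflL_coord, reflL_coord, reflL_coord]
  rcases eq_or_ne i (Fin.last n) with rfl | hi <;> simp [*]

lemma det_reflL : LinearMap.det (reflL n) = -1 := by
  classical
  set b := (EuclideanSpace.basisFun (Fin (n+1)) ℝ).toBasis
  have hmat : LinearMap.toMatrix b b (reflL n)
      = Matrix.diagonal (fun i => if i = Fin.last n then (-1:ℝ) else 1) := by
    ext i j
    rw [LinearMap.toMatrix_apply, Matrix.diagonal_apply]
    have hbj : b j = EuclideanSpace.single j 1 := by
      rw [OrthonormalBasis.coe_toBasis, EuclideanSpace.basisFun_apply]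
    have hrepr : ∀ x : Euc (n+1), b.repr x i = x i := fun x => by
      rw [OrthonormalBasis.coe_toBasis_repr_apply, EuclideanSpace.basisFun_repr]
    rw [hrepr, hbj, reflL_coord]
    rcases eq_or_ne i j with rfl | hij
    · rcases eq_or_ne i (Fin.last n) with rfl | hi <;>
        simp [EuclideanSpace.single_apply, *]
    · rcases eq_or_ne i (Fin.last n) with rfl | hi
      · simp [EuclideanSpace.single_apply, hij, Ne.symm hij, (Ne.symm hij : ¬ j = Fin.last n), if_neg]
      · simp [EuclideanSpace.single_apply, hij, Ne.symm hij, hi]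
  rw [← LinearMap.det_toMatrix b, hmat, Matrix.det_diagonal]
  rw [show (fun i => if i = Fin.last n then (-1:ℝ) else 1)
      = fun i => if i = Fin.last n then (-1:ℝ) else 1 from rfl]
  rw [Finset.prod_ite_eq' Finset.univ (Fin.last n) (fun _ => (-1:ℝ))]
  simp

lemma det_adjoint_eq (f : Euc (n+1) →ₗ[ℝ] Euc (n+1)) :
    LinearMap.det (LinearMap.adjoint f) = LinearMap.det f := by
  classical
  set b := EuclideanSpace.basisFun (Fin (n+1)) ℝ
  rw [← LinearMap.det_toMatrix b.toBasis, ← LinearMap.det_toMatrix b.toBasis f,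
    LinearMap.toMatrix_adjoint b b f, Matrix.det_conjTranspose]
  simp


section Geometry

variable {n : ℕ} {V : Set (Euc (n+1))} {x₀ y₀ : Euc (n+1)}

lemma exists_L (hx₀ : x₀ ∈ interior V) (hxy : (inner ℝ x₀ y₀ : ℝ) = -1)
    {A : Euc (n+1) →ᵃ[ℝ] Euc n}
    (hA : IsChart {x ∈ V | (inner ℝ x y₀ : ℝ) = -1} x₀ A) :
    ∃ L : Euc n →ₗ[ℝ] Euc (n+1),
      (∀ u, (inner ℝ (L u) y₀ : ℝ) = 0) ∧ (∀ u, A.linear (L u) = u) ∧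
      (∀ k : Euc (n+1), (inner ℝ k y₀ : ℝ) = -1 → L (A k) = k - x₀) := by
  classical
  set K : Set (Euc (n+1)) := {x ∈ V | (inner ℝ x y₀ : ℝ) = -1} with hK
  obtain ⟨hinj, hsurj, hA0⟩ := hA
  have hx₀V : x₀ ∈ V := interior_subset hx₀
  have hx₀K : x₀ ∈ K := ⟨hx₀V, hxy⟩
  set D : Submodule ℝ (Euc (n+1)) :=
    LinearMap.ker ((innerSL ℝ y₀ : Euc (n+1) →L[ℝ] ℝ) : Euc (n+1) →ₗ[ℝ] ℝ) with hD
  have hDmem : ∀ v : Euc (n+1), v ∈ D ↔ (inner ℝ v y₀ : ℝ) = 0 := by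
    intro v
    rw [hD, LinearMap.mem_ker]
    show (inner ℝ y₀ v : ℝ) = 0 ↔ _
    rw [real_inner_comm]
  set Hsub : AffineSubspace ℝ (Euc (n+1)) := AffineSubspace.mk' x₀ D with hHs
  have hHmem : ∀ x : Euc (n+1), x ∈ Hsub ↔ (inner ℝ x y₀ : ℝ) = -1 := by
    intro x
    rw [hHs, AffineSubspace.mem_mk', hDmem]
    have : (x -ᵥ x₀ : Euc (n+1)) = x - x₀ := rfl
    rw [this, inner_sub_left, hxy]
    constructor <;> intro h <;> linarith
  have hKH : K ⊆ (Hsub : Set (Euc (n+1))) := fun x hx => (hHmem x).2 hx.2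
  have hspan_le : affineSpan ℝ K ≤ Hsub := affineSpan_le.2 hKH
  have hHspan : (Hsub : Set (Euc (n+1))) ⊆ (affineSpan ℝ K : Set (Euc (n+1))) := by
    intro h hh
    rcases eq_or_ne h x₀ with rfl | hne
    · exact subset_affineSpan ℝ K hx₀K
    · obtain ⟨ε, hε, hball⟩ := Metric.isOpen_iff.1 isOpen_interior x₀ hx₀
      have hnorm : 0 < ‖h - x₀‖ := by
        rw [norm_pos_iff]; exact sub_ne_zero.2 hne
      set c : ℝ := ε / (2 * ‖h - x₀‖) with hc
      have hcpos : 0 < c := by positivity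
      set x : Euc (n+1) := x₀ + c • (h - x₀) with hx
      have hxV : x ∈ V := by
        refine interior_subset (hball ?_)
        rw [Metric.mem_ball, dist_eq_norm]
        have : x - x₀ = c • (h - x₀) := by rw [hx]; abel
        rw [this, norm_smul, Real.norm_eq_abs, abs_of_pos hcpos, hc]
        calc ε / (2 * ‖h - x₀‖) * ‖h - x₀‖ = ε / 2 := by field_simp
          _ < ε := by linarith
      have hxK : x ∈ K := by
        refine ⟨hxV, ?_⟩
        have hh0 : (inner ℝ (h - x₀) y₀ : ℝ) = 0 := by
          rw [inner_sub_left, (hHmem h).1 hh, hxy]; ring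
        rw [hx, inner_add_left, real_inner_smul_left, hh0, hxy]; ring
      have hmem := AffineSubspace.smul_vsub_vadd_mem (affineSpan ℝ K) c⁻¹
        (subset_affineSpan ℝ K hxK) (subset_affineSpan ℝ K hx₀K)
        (subset_affineSpan ℝ K hx₀K)
      have heq : c⁻¹ • (x -ᵥ x₀) +ᵥ x₀ = h := by
        have : (x -ᵥ x₀ : Euc (n+1)) = c • (h - x₀) := by rw [hx]; show x₀ + _ - x₀ = _; abel
        rw [this, smul_smul, inv_mul_cancel₀ hcpos.ne', one_smul]
        show (h - x₀) + x₀ = h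
        abel
      rwa [heq] at hmem
  -- the restricted linear map
  set g : D →ₗ[ℝ] Euc n := A.linear.comp D.subtype with hg
  have hmemD : ∀ (x : Euc (n+1)), (inner ℝ x y₀ : ℝ) = -1 → x - x₀ ∈ D := by
    intro x hxH
    rw [hDmem, inner_sub_left, hxH, hxy]; ring
  have hAadd : ∀ (v : Euc (n+1)), A (x₀ + v) = A x₀ + A.linear v := by
    intro v
    have h1 : x₀ + v = v +ᵥ x₀ := add_comm x₀ v
    rw [h1, AffineMap.map_vadd]
    exact add_comm _ _
  have hspan_of_D : ∀ v : Euc (n+1), v ∈ D → (x₀ + v) ∈ (affineSpan ℝ K : Set (Euc (n+1))) := by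
    intro v hv
    refine hHspan ?_
    rw [SetLike.mem_coe, hHmem, inner_add_left, hxy, (hDmem v).1 hv]
    ring
  have hg_inj : Function.Injective g := by
    intro v w hvw
    have h1 : A (x₀ + (v : Euc (n+1))) = A (x₀ + (w : Euc (n+1))) := by
      rw [hAadd, hAadd]
      have h2 : A.linear (v : Euc (n+1)) = A.linear (w : Euc (n+1)) := hvw
      rw [h2]
    have := hinj (hspan_of_D _ v.2) (hspan_of_D _ w.2) h1
    exact Subtype.ext (add_left_cancel this)
  have hg_surj : Function.Surjective g := by
    intro u
    have : u ∈ A '' (affineSpan ℝ K : Set (Euc (n+1))) := by rw [hsurj]; trivial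
    obtain ⟨x, hx, hAx⟩ := this
    have hxH : (inner ℝ x y₀ : ℝ) = -1 := (hHmem x).1 (hspan_le hx)
    refine ⟨⟨x - x₀, hmemD x hxH⟩, ?_⟩
    show A.linear (x - x₀) = u
    have : A.linear (x - x₀) = A x - A x₀ := A.linearMap_vsub x x₀
    rw [this, hA0, hAx, sub_zero]
  set eg := LinearEquiv.ofBijective g ⟨hg_inj, hg_surj⟩ with heg
  refine ⟨D.subtype.comp eg.symm.toLinearMap, ?_, ?_, ?_⟩
  · intro u
    exact (hDmem _).1 (eg.symm u).2
  · intro u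
    show A.linear ((eg.symm u : D) : Euc (n+1)) = u
    have : g (eg.symm u) = u := by
      have : eg (eg.symm u) = u := eg.apply_symm_apply u
      exact this
    exact this
  · intro k hk
    have hkD : k - x₀ ∈ D := hmemD k hk
    have hgk : g ⟨k - x₀, hkD⟩ = A k := by
      show A.linear (k - x₀) = A k
      have h2 : A.linear (k - x₀) = A k - A x₀ := A.linearMap_vsub k x₀
      rw [h2, hA0, sub_zero]
    have : eg.symm (A k) = ⟨k - x₀, hkD⟩ := by
      rw [← hgk]
      have : g ⟨k - x₀, hkD⟩ = eg ⟨k - x₀, hkD⟩ := by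
        rfl
      rw [this, LinearEquiv.symm_apply_apply]
    show ((eg.symm (A k) : D) : Euc (n+1)) = k - x₀
    rw [this]


lemma exists_MN (hx₀ : x₀ ∈ interior V) (hxy : (inner ℝ x₀ y₀ : ℝ) = -1)
    {A : Euc (n+1) →ᵃ[ℝ] Euc n}
    (hA : IsChart {x ∈ V | (inner ℝ x y₀ : ℝ) = -1} x₀ A) :
    ∃ M N : Euc (n+1) →ₗ[ℝ] Euc (n+1),
      Function.Bijective M ∧ Function.Bijective N ∧
      |LinearMap.det M| * |LinearMap.det N| = 1 ∧
      (∀ z, (inner ℝ (M z) y₀ : ℝ) = -(z (Fin.last n))) ∧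
      (∀ z, (inner ℝ x₀ (N z) : ℝ) = -(z (Fin.last n))) ∧
      (∀ z z', (inner ℝ (M z) (N z') : ℝ)
        = (inner ℝ (pr n z) (pr n z') : ℝ) - z (Fin.last n) * z' (Fin.last n)) ∧
      (∀ u : Euc n, A (M (elast n + inc n u)) = u) ∧
      (M (elast n) = x₀) ∧
      (∀ k : Euc (n+1), k ∈ V → (inner ℝ k y₀ : ℝ) = -1 →
        M (elast n + inc n (A k)) = k) := by
  classical
  obtain ⟨L, hL1, hL2, hL3⟩ := exists_L hx₀ hxy hA
  set M : Euc (n+1) →ₗ[ℝ] Euc (n+1) := (lastL n).smulRight x₀ + L.comp (pr n) with hM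
  have hMapp : ∀ z, M z = z (Fin.last n) • x₀ + L (pr n z) := fun z => rfl
  have hM1 : ∀ z, (inner ℝ (M z) y₀ : ℝ) = -(z (Fin.last n)) := by
    intro z
    rw [hMapp, inner_add_left, real_inner_smul_left, hxy, hL1]
    ring
  have hMker : ∀ z, M z = 0 → z = 0 := by
    intro z hz
    have h1 : (inner ℝ (M z) y₀ : ℝ) = 0 := by rw [hz, inner_zero_left]
    have h2 : z (Fin.last n) = 0 := by have := hM1 z; rw [h1] at this; linarith
    have h3 : L (pr n z) = 0 := by
      have := hMapp z
      rw [hz, h2, zero_smul, zero_add] at this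
      exact this.symm
    have h4 : pr n z = 0 := by
      have := congrArg A.linear h3
      rwa [hL2, map_zero] at this
    have := decomp z
    rw [h4, h2, map_zero, zero_smul, add_zero] at this
    exact this
  have hMinj : Function.Injective M := by
    intro a b hab
    have : M (a - b) = 0 := by rw [map_sub, hab, sub_self]
    have := hMker _ this
    exact sub_eq_zero.1 this
  have hMbij : Function.Bijective M := ⟨hMinj, (LinearMap.injective_iff_surjective).1 hMinj⟩
  -- adjoint
  set adjM := LinearMap.adjoint M with hadjM
  have hadj_inj : Function.Injective adjM := by
    intro a b hab
    have h0 : ∀ z, (inner ℝ (M z) (a - b) : ℝ) = 0 := by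
      intro z
      rw [← LinearMap.adjoint_inner_right M]
      rw [← hadjM, map_sub, hab, sub_self, inner_zero_right]
    have : ∀ w : Euc (n+1), (inner ℝ w (a - b) : ℝ) = 0 := by
      intro w
      obtain ⟨z, rfl⟩ := hMbij.surjective w
      exact h0 z
    have := this (a - b)
    rw [real_inner_self_eq_norm_sq] at this
    have : a - b = 0 := by
      by_contra hne
      have : 0 < ‖a - b‖ := norm_pos_iff.2 hne
      nlinarith
    exact sub_eq_zero.1 this
  have hadj_bij : Function.Bijective adjM :=
    ⟨hadj_inj, (LinearMap.injective_iff_surjective).1 hadj_inj⟩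
  set eadj := LinearEquiv.ofBijective adjM hadj_bij with headj
  set N : Euc (n+1) →ₗ[ℝ] Euc (n+1) := eadj.symm.toLinearMap.comp (reflL n) with hN
  have hadjN : ∀ z', adjM (N z') = reflL n z' := by
    intro z'
    show adjM (eadj.symm (reflL n z')) = reflL n z'
    have : eadj (eadj.symm (reflL n z')) = reflL n z' := eadj.apply_symm_apply _
    rwa [headj, LinearEquiv.ofBijective_apply] at this
  have hNbij : Function.Bijective N := by
    rw [hN]
    exact (eadj.symm.bijective.comp reflL_involutive.bijective : _)
  have hMN : ∀ z z', (inner ℝ (M z) (N z') : ℝ)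
      = (inner ℝ (pr n z) (pr n z') : ℝ) - z (Fin.last n) * z' (Fin.last n) := by
    intro z z'
    have h1 : (inner ℝ (M z) (N z') : ℝ) = (inner ℝ z (adjM (N z')) : ℝ) := by
      rw [hadjM]
      exact (LinearMap.adjoint_inner_right M _ _).symm
    rw [h1, hadjN, inner_reflL]
  have hMelast : M (elast n) = x₀ := by
    rw [hMapp]
    simp
  have hN1 : ∀ z', (inner ℝ x₀ (N z') : ℝ) = -(z' (Fin.last n)) := by
    intro z'
    rw [← hMelast, hMN]
    simp
  have hdet : |LinearMap.det M| * |LinearMap.det N| = 1 := by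
    have hcomp : adjM.comp N = reflL n := by
      apply LinearMap.ext
      intro z'
      exact hadjN z'
    have hdc : LinearMap.det adjM * LinearMap.det N = -1 := by
      rw [← LinearMap.det_comp, hcomp, det_reflL]
    rw [hadjM, det_adjoint_eq] at hdc
    have : |LinearMap.det M * LinearMap.det N| = 1 := by rw [hdc]; simp
    rwa [abs_mul] at this
  have hMK : ∀ k : Euc (n+1), k ∈ V → (inner ℝ k y₀ : ℝ) = -1 →
      M (elast n + inc n (A k)) = k := by
    intro k hkV hk
    rw [hMapp]
    have h1 : (elast n + inc n (A k)) (Fin.last n) = 1 := by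
      rw [PiLp.add_apply, elast_last, inc_apply_last, add_zero]
    have h2 : pr n (elast n + inc n (A k)) = A k := by
      rw [map_add, pr_elast, pr_inc, zero_add]
    rw [h1, h2, one_smul, hL3 k hk]
    abel
  have hAM : ∀ u : Euc n, A (M (elast n + inc n u)) = u := by
    intro u
    have h1 : M (elast n + inc n u) = x₀ + L u := by
      rw [hMapp]
      have h2 : (elast n + inc n u) (Fin.last n) = 1 := by
        rw [PiLp.add_apply, elast_last, inc_apply_last, add_zero]
      have h3 : pr n (elast n + inc n u) = u := by
        rw [map_add, pr_elast, pr_inc, zero_add]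
      rw [h2, h3, one_smul]
    rw [h1]
    have h4 : x₀ + L u = L u +ᵥ x₀ := add_comm x₀ (L u)
    rw [h4, AffineMap.map_vadd]
    have h5 : A x₀ = 0 := hA.2.2
    show A.linear (L u) + A x₀ = u
    rw [h5, hL2, add_zero]
  exact ⟨M, N, hMbij, hNbij, hdet, hM1, hN1, hMN, hAM, hMelast, hMK⟩

end Geometry

lemma lintegral_image_linear {d : ℕ} (P : Euc d →ₗ[ℝ] Euc d) (hP : Function.Bijective P)
    (s : Set (Euc d)) (hs : MeasurableSet s) (f : Euc d → ℝ≥0∞) (hf : Measurable f) :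
    ∫⁻ x in P '' s, f x = ENNReal.ofReal |LinearMap.det P| * ∫⁻ z in s, f (P z) := by
  have hdet : LinearMap.det P ≠ 0 := by
    have := LinearEquiv.isUnit_det' (LinearEquiv.ofBijective P hP)
    exact this.ne_zero
  have hmeas : Measurable P := P.continuous_of_finiteDimensional.measurable
  have himg : MeasurableSet (P '' s) := by
    have : P '' s = (LinearEquiv.ofBijective P hP).symm ⁻¹' s := by
      ext x
      constructor
      · rintro ⟨z, hz, rfl⟩
        simpa [LinearEquiv.symm_apply_apply] using hz
      · intro hx
        exact ⟨(LinearEquiv.ofBijective P hP).symm x, hx, by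
          simpa using (LinearEquiv.ofBijective P hP).apply_symm_apply x⟩
    rw [this]
    exact ((LinearEquiv.ofBijective P hP).symm.toLinearMap.continuous_of_finiteDimensional).measurable hs
  have hmap : Measure.map P volume = ENNReal.ofReal |LinearMap.det P|⁻¹ • volume := by
    rw [← abs_inv]
    exact Measure.map_linearMap_addHaar_eq_smul_addHaar volume hdet
  have h1 : ∫⁻ x in P '' s, f x ∂(Measure.map P volume)
      = ∫⁻ z in P ⁻¹' (P '' s), f (P z) := setLIntegral_map himg hf hmeas
  rw [Set.preimage_image_eq s hP.injective] at h1
  rw [hmap] at h1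
  rw [Measure.restrict_smul, lintegral_smul_measure] at h1
  have hc0 : ENNReal.ofReal |LinearMap.det P| ≠ 0 := by
    simp [ENNReal.ofReal_eq_zero, abs_pos.2 hdet, not_le.2 (abs_pos.2 hdet)]
  have hctop : ENNReal.ofReal |LinearMap.det P| ≠ ⊤ := ENNReal.ofReal_ne_top
  rw [← h1, smul_eq_mul, ← mul_assoc, ← ENNReal.ofReal_mul (abs_nonneg _),
    mul_inv_cancel₀ (abs_ne_zero.mpr hdet)]
  simp

/-- split equivalence -/
def splitE (n : ℕ) : Euc (n+1) ≃ᵐ ℝ × Euc n :=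
  ((MeasurableEquiv.toLp 2 (Fin (n+1) → ℝ)).symm).trans
    ((MeasurableEquiv.piFinSuccAbove (fun _ => ℝ) (Fin.last n)).trans
      (MeasurableEquiv.prodCongr (MeasurableEquiv.refl ℝ)
        (MeasurableEquiv.toLp 2 (Fin n → ℝ))))

lemma splitE_mp (n : ℕ) : MeasurePreserving (splitE n) volume volume := by
  have h1 := EuclideanSpace.volume_preserving_symm_measurableEquiv_toLp (Fin (n+1))
  have h2 := volume_preserving_piFinSuccAbove (fun _ : Fin (n+1) => ℝ) (Fin.last n)
  have h3 := (MeasurePreserving.id (volume : Measure ℝ)).prod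
    ((EuclideanSpace.volume_preserving_symm_measurableEquiv_toLp (Fin n)).symm)
  exact (h3.comp h2).comp h1

lemma splitE_fst (z : Euc (n+1)) : (splitE n z).1 = z (Fin.last n) := rfl

lemma splitE_snd (z : Euc (n+1)) : (splitE n z).2 = pr n z := by
  ext j
  show z ((Fin.last n).succAbove j) = z j.castSucc
  rw [Fin.succAbove_last]



lemma gamma_lint :
    ∫⁻ t in Ioi (0:ℝ), ENNReal.ofReal (Real.exp (-t) * t ^ n)
      = ENNReal.ofReal (n.factorial) := by
  have hint : IntegrableOn (fun x : ℝ => Real.exp (-x) * x ^ n) (Ioi 0) := by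
    have h := Real.GammaIntegral_convergent (s := (n:ℝ) + 1) (by positivity)
    refine h.congr_fun (fun x hx => ?_) measurableSet_Ioi
    rw [add_sub_cancel_right]; simp only [Real.rpow_natCast]
  have hnn : 0 ≤ᵐ[volume.restrict (Ioi (0:ℝ))] fun x : ℝ => Real.exp (-x) * x ^ n :=
    (ae_restrict_iff' measurableSet_Ioi).2 (ae_of_all _ fun x hx =>
      mul_nonneg (Real.exp_nonneg _) (pow_nonneg (le_of_lt hx) n))
  rw [← ofReal_integral_eq_lintegral_ofReal hint hnn]
  congr 1
  have := Real.Gamma_eq_integral (s := (n:ℝ) + 1) (by positivity)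
  rw [show ∫ x in Ioi (0:ℝ), Real.exp (-x) * x ^ n
      = ∫ x in Ioi (0:ℝ), Real.exp (-x) * x ^ ((n:ℝ) + 1 - 1) from
    setIntegral_congr_fun measurableSet_Ioi fun x hx => by
      rw [add_sub_cancel_right, Real.rpow_natCast], ← this]
  exact_mod_cast Real.Gamma_nat_eq_factorial n

lemma slice_lintegral (S : Set (Euc n)) (hSm : MeasurableSet S) :
    ∫⁻ p in {p : ℝ × Euc n | 0 < p.1 ∧ p.2 ∈ p.1 • S},
        ENNReal.ofReal (Real.exp (-p.1))
      = ENNReal.ofReal (n.factorial) * volume S := by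
  set U : Set (ℝ × Euc n) := {p | 0 < p.1 ∧ p.2 ∈ p.1 • S} with hU
  have hUm : MeasurableSet U := by
    have : U = {p : ℝ × Euc n | 0 < p.1} ∩ ((fun p : ℝ × Euc n => p.1⁻¹ • p.2) ⁻¹' S) := by
      ext ⟨t, u⟩
      simp only [hU, mem_setOf_eq, mem_inter_iff, mem_preimage]
      constructor
      · rintro ⟨ht, hu⟩
        exact ⟨ht, (mem_smul_set_iff_inv_smul_mem₀ ht.ne' _ _).1 hu⟩
      · rintro ⟨ht, hu⟩
        exact ⟨ht, (mem_smul_set_iff_inv_smul_mem₀ ht.ne' _ _).2 hu⟩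
    rw [this]
    exact (measurable_fst (by exact measurableSet_Ioi : MeasurableSet (Ioi (0:ℝ)))).inter
      ((measurable_fst.inv.smul measurable_snd) hSm)
  have hf : Measurable fun p : ℝ × Euc n => ENNReal.ofReal (Real.exp (-p.1)) :=
    (measurable_fst.neg.exp).ennreal_ofReal
  rw [← lintegral_indicator hUm, Measure.volume_eq_prod]
  rw [lintegral_prod _ ((hf.indicator hUm).aemeasurable)]
  have hinner : ∀ t : ℝ,
      (∫⁻ u, U.indicator (fun p => ENNReal.ofReal (Real.exp (-p.1))) (t, u))
        = (Ioi (0:ℝ)).indicator (fun t => ENNReal.ofReal (Real.exp (-t) * t ^ n)) t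
            * volume S := by
    intro t
    by_cases ht : 0 < t
    · have hset : MeasurableSet (t • S) := hSm.const_smul₀ t
      have : (fun u => U.indicator (fun p => ENNReal.ofReal (Real.exp (-p.1))) (t, u))
          = (t • S).indicator (fun _ => ENNReal.ofReal (Real.exp (-t))) := by
        funext u
        by_cases hu : u ∈ t • S <;> simp [indicator, hU, hu, ht]
      rw [this, lintegral_indicator_const hset,
        Measure.addHaar_smul_of_nonneg volume ht.le S,
        indicator_of_mem (show t ∈ Ioi (0:ℝ) from ht)]
      rw [ENNReal.ofReal_mul (Real.exp_nonneg _)]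
      rw [finrank_euclideanSpace_fin]
      ring
    · have : (fun u => U.indicator (fun p => ENNReal.ofReal (Real.exp (-p.1))) (t, u))
          = fun _ => 0 := by
        funext u
        simp [indicator, hU, ht]
      rw [this, lintegral_zero, indicator_of_notMem (by simpa using ht), zero_mul]
  simp_rw [hinner]
  have hgm : Measurable fun t : ℝ => ENNReal.ofReal (Real.exp (-t) * t ^ n) :=
    ((measurable_id.neg.exp).mul (measurable_id.pow_const n)).ennreal_ofReal
  rw [lintegral_mul_const _ (hgm.indicator measurableSet_Ioi)]
  rw [lintegral_indicator measurableSet_Ioi, gamma_lint]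


lemma core_integral (P : Euc (n+1) →ₗ[ℝ] Euc (n+1)) (hP : Function.Bijective P)
    (S : Set (Euc n)) (hSm : MeasurableSet S) (z₀ : Euc (n+1))
    (hz : ∀ z : Euc (n+1), (inner ℝ (P z) z₀ : ℝ) = -(z (Fin.last n))) :
    ∫⁻ x in P '' {z : Euc (n+1) | 0 < z (Fin.last n) ∧ pr n z ∈ z (Fin.last n) • S},
        ENNReal.ofReal (Real.exp ((inner ℝ x z₀ : ℝ)))
      = ENNReal.ofReal |LinearMap.det P| * (ENNReal.ofReal (n.factorial) * volume S) := by
  set Uh : Set (Euc (n+1)) := {z | 0 < z (Fin.last n) ∧ pr n z ∈ z (Fin.last n) • S} with hUh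
  have hUmem : Uh = (splitE n) ⁻¹' {p : ℝ × Euc n | 0 < p.1 ∧ p.2 ∈ p.1 • S} := by
    ext z
    simp only [hUh, mem_setOf_eq, mem_preimage, splitE_fst, splitE_snd]
  have hUhm : MeasurableSet Uh := by
    rw [hUmem]
    refine (splitE n).measurable ?_
    have : MeasurableSet ({p : ℝ × Euc n | 0 < p.1 ∧ p.2 ∈ p.1 • S}) := by
      have : {p : ℝ × Euc n | 0 < p.1 ∧ p.2 ∈ p.1 • S}
          = {p : ℝ × Euc n | 0 < p.1} ∩ ((fun p : ℝ × Euc n => p.1⁻¹ • p.2) ⁻¹' S) := by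
        ext ⟨t, u⟩
        simp only [mem_setOf_eq, mem_inter_iff, mem_preimage]
        constructor
        · rintro ⟨ht, hu⟩
          exact ⟨ht, (mem_smul_set_iff_inv_smul_mem₀ ht.ne' _ _).1 hu⟩
        · rintro ⟨ht, hu⟩
          exact ⟨ht, (mem_smul_set_iff_inv_smul_mem₀ ht.ne' _ _).2 hu⟩
      rw [this]
      exact (measurable_fst (by exact measurableSet_Ioi : MeasurableSet (Ioi (0:ℝ)))).inter
        ((measurable_fst.inv.smul measurable_snd) hSm)
    exact this
  have hfm : Measurable fun x : Euc (n+1) => ENNReal.ofReal (Real.exp ((inner ℝ x z₀ : ℝ))) := by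
    have : Continuous fun x : Euc (n+1) => Real.exp ((inner ℝ x z₀ : ℝ)) :=
      (continuous_id.inner continuous_const).rexp
    exact this.measurable.ennreal_ofReal
  rw [lintegral_image_linear P hP Uh hUhm _ hfm]
  congr 1
  have hint : ∀ z : Euc (n+1), ENNReal.ofReal (Real.exp ((inner ℝ (P z) z₀ : ℝ)))
      = ENNReal.ofReal (Real.exp (-(z (Fin.last n)))) := fun z => by rw [hz]
  calc ∫⁻ z in Uh, ENNReal.ofReal (Real.exp ((inner ℝ (P z) z₀ : ℝ)))
      = ∫⁻ z in Uh, ENNReal.ofReal (Real.exp (-(z (Fin.last n)))) := by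
        exact lintegral_congr fun z => hint z
    _ = ∫⁻ p in {p : ℝ × Euc n | 0 < p.1 ∧ p.2 ∈ p.1 • S},
          ENNReal.ofReal (Real.exp (-p.1)) := by
        rw [hUmem]
        exact (splitE_mp n).setLIntegral_comp_preimage_emb
          (MeasurableEquiv.measurableEmbedding _)
          (fun p : ℝ × Euc n => ENNReal.ofReal (Real.exp (-p.1))) _
    _ = ENNReal.ofReal (n.factorial) * volume S := slice_lintegral S hSm


lemma core_integral_real (P : Euc (n+1) →ₗ[ℝ] Euc (n+1)) (hP : Function.Bijective P)
    (S : Set (Euc n)) (hSm : MeasurableSet S) (hS : volume S ≠ ⊤) (z₀ : Euc (n+1))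
    (hz : ∀ z : Euc (n+1), (inner ℝ (P z) z₀ : ℝ) = -(z (Fin.last n))) :
    ∫ x in P '' {z : Euc (n+1) | 0 < z (Fin.last n) ∧ pr n z ∈ z (Fin.last n) • S},
        Real.exp ((inner ℝ x z₀ : ℝ))
      = |LinearMap.det P| * (n.factorial * (volume S).toReal) := by
  have hcont : Continuous fun x : Euc (n+1) => Real.exp ((inner ℝ x z₀ : ℝ)) :=
    (continuous_id.inner continuous_const).rexp
  rw [integral_eq_lintegral_of_nonneg_ae (ae_of_all _ fun x => Real.exp_nonneg _)
    hcont.aestronglyMeasurable.restrict]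
  rw [core_integral P hP S hSm z₀ hz]
  rw [ENNReal.toReal_mul, ENNReal.toReal_mul, ENNReal.toReal_ofReal (abs_nonneg _),
    ENNReal.toReal_ofReal (by positivity)]

section Bounds

variable {n : ℕ} {V : Set (Euc (n+1))} {x₀ y₀ : Euc (n+1)}

lemma dual_inner_bound (hy₀ : y₀ ∈ interior (dualConeSet V)) :
    ∃ r > 0, ∀ x ∈ V, (inner ℝ x y₀ : ℝ) ≤ -(r * ‖x‖) := by
  obtain ⟨ε, hε, hball⟩ := Metric.isOpen_iff.1 isOpen_interior y₀ hy₀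
  refine ⟨ε/2, by positivity, fun x hx => ?_⟩
  rcases eq_or_ne x 0 with rfl | hx0
  · simp
  · have hn : 0 < ‖x‖ := norm_pos_iff.2 hx0
    set y := y₀ + (ε/2) • (‖x‖⁻¹ • x) with hy
    have hyb : y ∈ dualConeSet V := interior_subset (hball (by
      rw [Metric.mem_ball, dist_eq_norm]
      have h1 : y - y₀ = (ε/2) • (‖x‖⁻¹ • x) := by rw [hy]; abel
      rw [h1, norm_smul, norm_smul, norm_inv, norm_norm, Real.norm_eq_abs,
        abs_of_pos (by positivity : (0:ℝ) < ε/2), inv_mul_cancel₀ hn.ne', mul_one]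
      linarith))
    have h2 := hyb x hx
    rw [hy, inner_add_right, real_inner_smul_right, real_inner_smul_right,
      real_inner_self_eq_norm_sq] at h2
    have hxx : ‖x‖⁻¹ * ‖x‖^2 = ‖x‖ := by field_simp
    rw [hxx] at h2
    linarith

lemma primal_inner_bound (hx₀ : x₀ ∈ interior V) :
    ∃ r > 0, ∀ y ∈ dualConeSet V, (inner ℝ x₀ y : ℝ) ≤ -(r * ‖y‖) := by
  obtain ⟨ε, hε, hball⟩ := Metric.isOpen_iff.1 isOpen_interior x₀ hx₀
  refine ⟨ε/2, by positivity, fun y hy => ?_⟩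
  rcases eq_or_ne y 0 with rfl | hy0
  · simp
  · have hn : 0 < ‖y‖ := norm_pos_iff.2 hy0
    set x := x₀ + (ε/2) • (‖y‖⁻¹ • y) with hx
    have hxV : x ∈ V := interior_subset (hball (by
      rw [Metric.mem_ball, dist_eq_norm]
      have h1 : x - x₀ = (ε/2) • (‖y‖⁻¹ • y) := by rw [hx]; abel
      rw [h1, norm_smul, norm_smul, norm_inv, norm_norm, Real.norm_eq_abs,
        abs_of_pos (by positivity : (0:ℝ) < ε/2), inv_mul_cancel₀ hn.ne', mul_one]
      linarith))
    have h2 := hy x hxV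
    rw [hx, inner_add_left, real_inner_smul_left, real_inner_smul_left,
      real_inner_self_eq_norm_sq] at h2
    have hxx : ‖y‖⁻¹ * ‖y‖^2 = ‖y‖ := by field_simp
    rw [hxx] at h2
    linarith

end Bounds



section MainLemma

variable {n : ℕ} {V : Set (Euc (n+1))} {x₀ y₀ : Euc (n+1)}

set_option maxHeartbeats 1600000 in
lemma main_ML (hcl : IsClosed V)
    (hcone : ∀ x ∈ V, ∀ t : ℝ, 0 ≤ t → t • x ∈ V)
    (hx₀ : x₀ ∈ interior V) (hy₀ : y₀ ∈ interior (dualConeSet V))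
    (hxy : (inner ℝ x₀ y₀ : ℝ) = -1)
    (A : Euc (n+1) →ᵃ[ℝ] Euc n) (hA : IsChart {x ∈ V | (inner ℝ x y₀ : ℝ) = -1} x₀ A) :
    mahlerVol (⇑A '' {x ∈ V | (inner ℝ x y₀ : ℝ) = -1}) =
      (1 / (n.factorial : ℝ) ^ 2) *
        ((∫ x in V, Real.exp ((inner ℝ x y₀ : ℝ))) *
          ∫ y in dualConeSet V, Real.exp ((inner ℝ x₀ y : ℝ))) := by
  classical
  set K : Set (Euc (n+1)) := {x ∈ V | (inner ℝ x y₀ : ℝ) = -1} with hKdef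
  set K' : Set (Euc n) := ⇑A '' K with hK'def
  set W := dualConeSet V with hWdef
  obtain ⟨M, N, hMbij, hNbij, hdet, hM1, hN1, hMN, hAM, hMelast, hMK⟩ := exists_MN hx₀ hxy hA
  have hx₀V : x₀ ∈ V := interior_subset hx₀
  obtain ⟨r, hr, hbound⟩ := dual_inner_bound hy₀
  have hVneg : ∀ x ∈ V, x ≠ 0 → (inner ℝ x y₀ : ℝ) < 0 := by
    intro x hx hx0
    have h1 := hbound x hx
    have h2 : 0 < r * ‖x‖ := mul_pos hr (norm_pos_iff.2 hx0)
    linarith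
  obtain ⟨r', hr', hbound'⟩ := primal_inner_bound hx₀
  have hWneg : ∀ y ∈ W, y ≠ 0 → (inner ℝ x₀ y : ℝ) < 0 := by
    intro y hy hy0
    have h1 := hbound' y hy
    have h2 : 0 < r' * ‖y‖ := mul_pos hr' (norm_pos_iff.2 hy0)
    linarith
  -- K is compact
  have hKcl : IsClosed K := by
    have : K = V ∩ (fun x : Euc (n+1) => (inner ℝ x y₀ : ℝ)) ⁻¹' {-1} := by
      ext x; simp [hKdef]
    rw [this]
    exact hcl.inter (IsClosed.preimage (continuous_id.inner continuous_const)
      isClosed_singleton)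
  have hKbdd : Bornology.IsBounded K := by
    refine Metric.isBounded_closedBall (x := (0 : Euc (n+1))) (r := 1/r) |>.subset ?_
    intro x hx
    rw [Metric.mem_closedBall, dist_zero_right]
    have h1 := hbound x hx.1
    rw [hx.2] at h1
    rw [le_div_iff₀ hr]
    nlinarith
  have hKcomp : IsCompact K := Metric.isCompact_of_isClosed_isBounded hKcl hKbdd
  have hAc : Continuous A := A.continuous_of_finiteDimensional
  have hK'comp : IsCompact K' := hKcomp.image hAc
  have hK'm : MeasurableSet K' := hK'comp.isClosed.measurableSet
  have hK'fin : volume K' ≠ ⊤ := hK'comp.measure_lt_top.ne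
  -- small ball inside K'
  obtain ⟨δ, hδ, hballK'⟩ : ∃ δ > 0, Metric.ball (0 : Euc n) δ ⊆ K' := by
    obtain ⟨ε, hε, hballV⟩ := Metric.isOpen_iff.1 isOpen_interior x₀ hx₀
    set T : Euc n →ₗ[ℝ] Euc (n+1) := M.comp (inc n) with hT
    set Tc := LinearMap.toContinuousLinearMap T with hTc
    refine ⟨ε / (‖Tc‖ + 1), by positivity, ?_⟩
    intro u hu
    rw [Metric.mem_ball, dist_zero_right] at hu
    have hnum : 0 < ‖Tc‖ + 1 := by positivity
    have hTu : ‖T u‖ < ε := by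
      have h1 : ‖Tc u‖ ≤ ‖Tc‖ * ‖u‖ := Tc.le_opNorm u
      have h2 : ‖Tc‖ * ‖u‖ ≤ (‖Tc‖ + 1) * ‖u‖ := by
        nlinarith [norm_nonneg u, norm_nonneg Tc]
      have h3 : (‖Tc‖ + 1) * ‖u‖ < (‖Tc‖ + 1) * (ε / (‖Tc‖ + 1)) :=
        (mul_lt_mul_iff_right₀ hnum).2 hu
      have h4 : (‖Tc‖ + 1) * (ε / (‖Tc‖ + 1)) = ε := by field_simp
      have hTcu : Tc u = T u := rfl
      rw [← hTcu]
      linarith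
    -- the point x₀ + T u is in K
    set xu : Euc (n+1) := M (elast n + inc n u) with hxu
    have hxu_eq : xu = x₀ + T u := by
      rw [hxu, map_add, hMelast, hT]
      rfl
    have hxuV : xu ∈ V := by
      rw [hxu_eq]
      refine interior_subset (hballV ?_)
      rw [Metric.mem_ball, dist_eq_norm]
      have : x₀ + T u - x₀ = T u := by abel
      rw [this]
      exact hTu
    have hxuK : xu ∈ K := by
      refine ⟨hxuV, ?_⟩
      have := hM1 (elast n + inc n u)
      rw [← hxu] at this
      rw [this, PiLp.add_apply, elast_last, inc_apply_last]
      norm_num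
    have : A xu = u := hAM u
    exact ⟨xu, hxuK, this⟩
  -- polar is closed and bounded
  have hpolarcl : IsClosed (polarSet K') := by
    have : polarSet K' = ⋂ x ∈ K', {y : Euc n | (inner ℝ x y : ℝ) ≤ 1} := by
      ext y; simp [polarSet]
    rw [this]
    exact isClosed_biInter fun x _ =>
      isClosed_le (continuous_const.inner continuous_id) continuous_const
  have hpolarbdd : polarSet K' ⊆ Metric.closedBall 0 (2/δ) := by
    intro w hw
    rw [Metric.mem_closedBall, dist_zero_right]
    rcases eq_or_ne w 0 with rfl | hw0
    · simp; positivity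
    · have hn : 0 < ‖w‖ := norm_pos_iff.2 hw0
      set u : Euc n := (δ/2) • (‖w‖⁻¹ • w) with hu
      have huK' : u ∈ K' := hballK' (by
        rw [Metric.mem_ball, dist_zero_right, hu, norm_smul, norm_smul, norm_inv,
          norm_norm, Real.norm_eq_abs, abs_of_pos (by positivity : (0:ℝ) < δ/2),
          inv_mul_cancel₀ hn.ne', mul_one]
        linarith)
      have h1 := hw u huK'
      rw [hu, real_inner_smul_left, real_inner_smul_left,
        real_inner_self_eq_norm_sq] at h1
      have hxx : ‖w‖⁻¹ * ‖w‖^2 = ‖w‖ := by field_simp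
      rw [hxx] at h1
      rw [le_div_iff₀ hδ]
      nlinarith
  have hpolarm : MeasurableSet (polarSet K') := hpolarcl.measurableSet
  have hpolarfin : volume (polarSet K') ≠ ⊤ :=
    ((measure_mono hpolarbdd).trans_lt measure_closedBall_lt_top).ne
  -- the cone parametrizations
  set Uh : Set (Euc (n+1)) :=
    {z | 0 < z (Fin.last n) ∧ pr n z ∈ z (Fin.last n) • K'} with hUhdef
  set Th : Set (Euc (n+1)) :=
    {z | 0 < z (Fin.last n) ∧ pr n z ∈ z (Fin.last n) • polarSet K'} with hThdef
  have hfacM : ∀ (t : ℝ) (u : Euc n), (t • (elast n + inc n u)) (Fin.last n) = t := by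
    intro t u
    rw [PiLp.smul_apply, PiLp.add_apply, elast_last, inc_apply_last]
    simp
  have hfacPr : ∀ (t : ℝ) (u : Euc n), pr n (t • (elast n + inc n u)) = t • u := by
    intro t u
    rw [_root_.map_smul, map_add, pr_elast, pr_inc, zero_add]
  have hzdecomp : ∀ z : Euc (n+1), ∀ t : ℝ, ∀ u : Euc n,
      z (Fin.last n) = t → pr n z = t • u → z = t • (elast n + inc n u) := by
    intro z t u h1 h2
    have := decomp z
    rw [h1, h2] at this
    rw [this, smul_add, _root_.map_smul]
    abel
  have hVset : V \ {0} = M '' Uh := by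
    ext x
    constructor
    · rintro ⟨hxV, hx0⟩
      simp only [mem_singleton_iff] at hx0
      set t : ℝ := -(inner ℝ x y₀ : ℝ) with ht
      have htpos : 0 < t := by
        rw [ht]; have := hVneg x hxV hx0; linarith
      set k : Euc (n+1) := t⁻¹ • x with hk
      have hkV : k ∈ V := hcone x hxV t⁻¹ (inv_nonneg.2 htpos.le)
      have hkinner : (inner ℝ k y₀ : ℝ) = -1 := by
        have hxi : (inner ℝ x y₀ : ℝ) = -t := by rw [ht]; ring
        rw [hk, real_inner_smul_left, hxi]
        field_simp
      have hkK : k ∈ K := ⟨hkV, hkinner⟩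
      refine ⟨t • (elast n + inc n (A k)), ⟨?_, ?_⟩, ?_⟩
      · rw [hfacM]; exact htpos
      · rw [hfacM, hfacPr]
        exact smul_mem_smul_set (mem_image_of_mem _ hkK)
      · rw [_root_.map_smul, hMK k hkV hkinner, hk, smul_smul, mul_inv_cancel₀ htpos.ne',
          one_smul]
    · rintro ⟨z, ⟨hzpos, hzpr⟩, rfl⟩
      obtain ⟨u, huK', hupr⟩ := hzpr
      obtain ⟨k, hkK, hAk⟩ := huK'
      have hzeq : z = z (Fin.last n) • (elast n + inc n u) :=
        hzdecomp z _ u rfl hupr.symm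
      have hMz : M z = z (Fin.last n) • k := by
        conv_lhs => rw [hzeq]
        rw [_root_.map_smul, ← hAk, hMK k hkK.1 hkK.2]
      constructor
      · rw [hMz]
        exact hcone k hkK.1 _ hzpos.le
      · simp only [mem_singleton_iff]
        intro h0
        have := hM1 z
        rw [h0, inner_zero_left] at this
        have h2 : z (Fin.last n) = 0 := by linarith
        exact absurd h2 hzpos.ne'
  have hWset : W \ {0} = N '' Th := by
    ext y
    constructor
    · rintro ⟨hyW, hy0⟩
      simp only [mem_singleton_iff] at hy0
      set s : ℝ := -(inner ℝ x₀ y : ℝ) with hs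
      have hspos : 0 < s := by
        rw [hs]; have := hWneg y hyW hy0; linarith
      obtain ⟨z, rfl⟩ := hNbij.surjective y
      have hzlast : z (Fin.last n) = s := by
        have := hN1 z
        rw [hs]; linarith
      set w : Euc n := s⁻¹ • pr n z with hw
      have hzeq : z = s • (elast n + inc n w) := by
        refine hzdecomp z s w hzlast ?_
        rw [hw, smul_smul, mul_inv_cancel₀ hspos.ne', one_smul]
      have hNw : N (elast n + inc n w) = s⁻¹ • N z := by
        have : N z = s • N (elast n + inc n w) := by rw [← _root_.map_smul, ← hzeq]
        rw [this, smul_smul, inv_mul_cancel₀ hspos.ne', one_smul]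
      have hwpolar : w ∈ polarSet K' := by
        intro u' hu'
        obtain ⟨k, hkK, hAk⟩ := hu'
        have h1 := hMN (elast n + inc n (A k)) (elast n + inc n w)
        rw [hMK k hkK.1 hkK.2] at h1
        have h2 : pr n (elast n + inc n (A k)) = A k := by
          rw [map_add, pr_elast, pr_inc, zero_add]
        have h3 : pr n (elast n + inc n w) = w := by
          rw [map_add, pr_elast, pr_inc, zero_add]
        have h4 : (elast n + inc n (A k)) (Fin.last n) = 1 := by
          rw [PiLp.add_apply, elast_last, inc_apply_last]; norm_num
        have h5 : (elast n + inc n w) (Fin.last n) = 1 := by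
          rw [PiLp.add_apply, elast_last, inc_apply_last]; norm_num
        rw [h2, h3, h4, h5, hNw, real_inner_smul_right] at h1
        have h6 : (inner ℝ k (N z) : ℝ) ≤ 0 := hyW k hkK.1
        have h7 : s⁻¹ * (inner ℝ k (N z) : ℝ) ≤ 0 :=
          mul_nonpos_of_nonneg_of_nonpos (by positivity) h6
        rw [hAk] at h1
        nlinarith
      refine ⟨z, ⟨?_, ?_⟩, rfl⟩
      · rw [hzlast]; exact hspos
      · rw [hzlast]
        have : pr n z = s • w := by
          rw [hw, smul_smul, mul_inv_cancel₀ hspos.ne', one_smul]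
        rw [this]
        exact smul_mem_smul_set hwpolar
    · rintro ⟨z, ⟨hzpos, hzpr⟩, rfl⟩
      obtain ⟨w, hwpolar, hwpr⟩ := hzpr
      have hzeq : z = z (Fin.last n) • (elast n + inc n w) :=
        hzdecomp z _ w rfl hwpr.symm
      have hy1W : N (elast n + inc n w) ∈ W := by
        intro x hxV
        rcases eq_or_ne x 0 with rfl | hx0
        · rw [inner_zero_left]
        · set t : ℝ := -(inner ℝ x y₀ : ℝ) with ht
          have htpos : 0 < t := by
            rw [ht]; have := hVneg x hxV hx0; linarith
          set k : Euc (n+1) := t⁻¹ • x with hk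
          have hkV : k ∈ V := hcone x hxV t⁻¹ (inv_nonneg.2 htpos.le)
          have hkinner : (inner ℝ k y₀ : ℝ) = -1 := by
            have hxi : (inner ℝ x y₀ : ℝ) = -t := by rw [ht]; ring
            rw [hk, real_inner_smul_left, hxi]; field_simp
          have h1 := hMN (elast n + inc n (A k)) (elast n + inc n w)
          rw [hMK k hkV hkinner] at h1
          have h2 : pr n (elast n + inc n (A k)) = A k := by
            rw [map_add, pr_elast, pr_inc, zero_add]
          have h3 : pr n (elast n + inc n w) = w := by
            rw [map_add, pr_elast, pr_inc, zero_add]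
          have h4 : (elast n + inc n (A k)) (Fin.last n) = 1 := by
            rw [PiLp.add_apply, elast_last, inc_apply_last]; norm_num
          have h5 : (elast n + inc n w) (Fin.last n) = 1 := by
            rw [PiLp.add_apply, elast_last, inc_apply_last]; norm_num
          rw [h2, h3, h4, h5] at h1
          have h6 : (inner ℝ (A k) w : ℝ) ≤ 1 := hwpolar (A k) (mem_image_of_mem _ ⟨hkV, hkinner⟩)
          have hxk : x = t • k := by
            rw [hk, smul_smul, mul_inv_cancel₀ htpos.ne', one_smul]
          rw [hxk, real_inner_smul_left]
          have : (inner ℝ k (N (elast n + inc n w)) : ℝ) ≤ 0 := by rw [h1]; linarith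
          exact mul_nonpos_of_nonneg_of_nonpos htpos.le this
      constructor
      · show N z ∈ W
        intro x hxV
        have : N z = z (Fin.last n) • N (elast n + inc n w) := by
          rw [← _root_.map_smul, ← hzeq]
        rw [this, real_inner_smul_right]
        exact mul_nonpos_of_nonneg_of_nonpos hzpos.le (hy1W x hxV)
      · simp only [mem_singleton_iff]
        intro h0
        have := hN1 z
        rw [h0, inner_zero_right] at this
        linarith [hzpos, this.symm.le]
  -- integral computations
  have hnull : ∀ S : Set (Euc (n+1)), (S \ {0} : Set (Euc (n+1))) =ᵐ[volume] S :=
    fun S => diff_null_ae_eq_self (measure_singleton 0)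
  have hI₁ : ∫ x in V, Real.exp ((inner ℝ x y₀ : ℝ))
      = |LinearMap.det M| * (n.factorial * (volume K').toReal) := by
    rw [← setIntegral_congr_set (hnull V), hVset]
    exact core_integral_real M hMbij K' hK'm hK'fin y₀ hM1
  have hI₂ : ∫ y in W, Real.exp ((inner ℝ x₀ y : ℝ))
      = |LinearMap.det N| * (n.factorial * (volume (polarSet K')).toReal) := by
    have hcongr : ∀ y : Euc (n+1), Real.exp ((inner ℝ x₀ y : ℝ)) = Real.exp ((inner ℝ y x₀ : ℝ)) := by
      intro y; rw [real_inner_comm]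
    simp_rw [hcongr]
    rw [← setIntegral_congr_set (hnull W), hWset]
    refine core_integral_real N hNbij (polarSet K') hpolarm hpolarfin x₀ ?_
    intro z
    rw [real_inner_comm]
    exact hN1 z
  -- final algebra
  rw [hI₁, hI₂]
  show (volume K').toReal * (volume (polarSet K')).toReal = _
  have hfac : (n.factorial : ℝ) ≠ 0 := Nat.cast_ne_zero.2 n.factorial_ne_zero
  set a := |LinearMap.det M|
  set b := |LinearMap.det N|
  set v₁ := (volume K').toReal
  set v₂ := (volume (polarSet K')).toReal
  have : (1 / (n.factorial:ℝ)^2) * ((a * (n.factorial * v₁)) * (b * (n.factorial * v₂)))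
      = (a*b) * (v₁ * v₂) := by field_simp
  rw [this, hdet, one_mul]

end MainLemma


section Final

variable {n : ℕ}

lemma dual_closed (V : Set (Euc (n+1))) : IsClosed (dualConeSet V) := by
  have : dualConeSet V = ⋂ x ∈ V, {y : Euc (n+1) | (inner ℝ x y : ℝ) ≤ 0} := by
    ext y; simp [dualConeSet]
  rw [this]
  exact isClosed_biInter fun x _ =>
    isClosed_le (continuous_const.inner continuous_id) continuous_const

lemma dual_cone_smul (V : Set (Euc (n+1))) :
    ∀ y ∈ dualConeSet V, ∀ t : ℝ, 0 ≤ t → t • y ∈ dualConeSet V := by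
  intro y hy t ht x hx
  rw [real_inner_smul_right]
  exact mul_nonpos_of_nonneg_of_nonpos ht (hy x hx)

lemma bipolar (V : Set (Euc (n+1))) (hcl : IsClosed V) (hconv : Convex ℝ V)
    (hcone : ∀ x ∈ V, ∀ t : ℝ, 0 ≤ t → t • x ∈ V) (h0 : (0 : Euc (n+1)) ∈ V) :
    dualConeSet (dualConeSet V) = V := by
  ext z
  constructor
  · intro hz
    by_contra hzV
    obtain ⟨f, u, hfV, hfz⟩ := geometric_hahn_banach_closed_point hconv hcl hzV
    have hu : 0 < u := by have := hfV 0 h0; rw [map_zero] at this; exact this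
    have hle : ∀ a ∈ V, f a ≤ 0 := by
      intro a ha
      by_contra hpos
      push_neg at hpos
      have h1 := hfV _ (hcone a ha (u / f a + 1) (by have := div_pos hu hpos; linarith))
      rw [map_smul, smul_eq_mul, add_mul, div_mul_cancel₀ _ hpos.ne', one_mul] at h1
      linarith
    set w := (InnerProductSpace.toDual ℝ (Euc (n+1))).symm f with hw
    have hwd : w ∈ dualConeSet V := by
      intro a ha
      rw [real_inner_comm, hw, InnerProductSpace.toDual_symm_apply]
      exact hle a ha
    have := hz w hwd
    have h2 : inner ℝ w z = f z := InnerProductSpace.toDual_symm_apply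
    linarith
  · intro hz y hy
    have := hy z hz
    rw [real_inner_comm]
    exact this

lemma cone_mahler_main (V : Set (Euc (n+1))) (hV : IsProperCone V)
    (x₀ y₀ : Euc (n+1)) (hx₀ : x₀ ∈ interior V)
    (hy₀ : y₀ ∈ interior (dualConeSet V)) (hxy : (inner ℝ x₀ y₀ : ℝ) = -1) :
    ∀ A B : Euc (n+1) →ᵃ[ℝ] Euc n,
      IsChart {x ∈ V | (inner ℝ x y₀ : ℝ) = -1} x₀ A →
      IsChart {y ∈ dualConeSet V | (inner ℝ x₀ y : ℝ) = -1} y₀ B →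
      mahlerVol (⇑A '' {x ∈ V | (inner ℝ x y₀ : ℝ) = -1}) =
        (1 / (n.factorial : ℝ) ^ 2) *
          ((∫ x in V, Real.exp ((inner ℝ x y₀ : ℝ))) *
            ∫ y in dualConeSet V, Real.exp ((inner ℝ x₀ y : ℝ))) ∧
      mahlerVol (⇑B '' {y ∈ dualConeSet V | (inner ℝ x₀ y : ℝ) = -1}) =
        (1 / (n.factorial : ℝ) ^ 2) *
          ((∫ x in V, Real.exp ((inner ℝ x y₀ : ℝ))) *
            ∫ y in dualConeSet V, Real.exp ((inner ℝ x₀ y : ℝ))) := by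
  obtain ⟨hcl, hconv, hcone, hint, hsal⟩ := hV
  intro A B hA hB
  have h0V : (0 : Euc (n+1)) ∈ V := by
    have := hcone x₀ (interior_subset hx₀) 0 le_rfl
    rwa [zero_smul] at this
  constructor
  · exact main_ML hcl hcone hx₀ hy₀ hxy A hA
  · have hWcl : IsClosed (dualConeSet V) := dual_closed V
    have hWcone := dual_cone_smul V
    have hbip : dualConeSet (dualConeSet V) = V := bipolar V hcl hconv hcone h0V
    have hyx : (inner ℝ y₀ x₀ : ℝ) = -1 := by rw [real_inner_comm]; exact hxy
    have hx₀' : x₀ ∈ interior (dualConeSet (dualConeSet V)) := by rw [hbip]; exact hx₀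
    have hsetEq : {y ∈ dualConeSet V | (inner ℝ x₀ y : ℝ) = -1}
        = {y ∈ dualConeSet V | (inner ℝ y x₀ : ℝ) = -1} := by
      ext y
      constructor
      · rintro ⟨h1, h2⟩; exact ⟨h1, by rw [real_inner_comm]; exact h2⟩
      · rintro ⟨h1, h2⟩; exact ⟨h1, by rw [real_inner_comm]; exact h2⟩
    have hB' : IsChart {y ∈ dualConeSet V | (inner ℝ y x₀ : ℝ) = -1} y₀ B := by
      rw [← hsetEq]; exact hB
    have hmain := main_ML hWcl hWcone hy₀ hx₀' hyx B hB'
    rw [hsetEq, hmain, hbip]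
    have hc1 : ∫ z in V, Real.exp ((inner ℝ y₀ z : ℝ)) = ∫ x in V, Real.exp ((inner ℝ x y₀ : ℝ)) := by
      have : (fun z : Euc (n+1) => Real.exp ((inner ℝ y₀ z : ℝ)))
          = fun z : Euc (n+1) => Real.exp ((inner ℝ z y₀ : ℝ)) := by
        funext z; rw [real_inner_comm]
      rw [this]
    have hc2 : ∫ y in dualConeSet V, Real.exp ((inner ℝ y x₀ : ℝ))
        = ∫ y in dualConeSet V, Real.exp ((inner ℝ x₀ y : ℝ)) := by
      have : (fun y : Euc (n+1) => Real.exp ((inner ℝ y x₀ : ℝ)))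
          = fun y : Euc (n+1) => Real.exp ((inner ℝ x₀ y : ℝ)) := by
        funext y; rw [real_inner_comm]
      rw [this]
    rw [hc1, hc2]
    ring

end Final

end CMtest

/-- Mahler volumes of dual hyperplane sections of a cone via the
Laplace transform. -/
theorem cone_mahler_formula (n : ℕ) (V : Set (Euc (n + 1))) (hV : IsProperCone V)
    (x₀ y₀ : Euc (n + 1)) (hx₀ : x₀ ∈ interior V)
    (hy₀ : y₀ ∈ interior (dualConeSet V)) (hxy : (inner ℝ x₀ y₀ : ℝ) = -1) :
    ∀ A B : Euc (n + 1) →ᵃ[ℝ] Euc n,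
      IsChart {x ∈ V | (inner ℝ x y₀ : ℝ) = -1} x₀ A →
      IsChart {y ∈ dualConeSet V | (inner ℝ x₀ y : ℝ) = -1} y₀ B →
      mahlerVol (⇑A '' {x ∈ V | (inner ℝ x y₀ : ℝ) = -1}) =
        (1 / (n.factorial : ℝ) ^ 2) *
          ((∫ x in V, Real.exp ((inner ℝ x y₀ : ℝ))) *
            ∫ y in dualConeSet V, Real.exp ((inner ℝ x₀ y : ℝ))) ∧
      mahlerVol (⇑B '' {y ∈ dualConeSet V | (inner ℝ x₀ y : ℝ) = -1}) =
        (1 / (n.factorial : ℝ) ^ 2) *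
          ((∫ x in V, Real.exp ((inner ℝ x y₀ : ℝ))) *
            ∫ y in dualConeSet V, Real.exp ((inner ℝ x₀ y : ℝ))) := by
  exact CMtest.cone_mahler_main V hV x₀ y₀ hx₀ hy₀ hxy

end
end

section
/- Let V ⊂ ℝ^{n+1} be a proper convex cone and let y be in the interior of V*. Then ∇Φ_V(y + V*) ⊆ (n+1)·C_y, where C_y = {x ∈ V : ⟨x, y⟩ ≥ −1} is the truncated cone; that is, for every z ∈ y + V* lying in the interior of V*, the point ∇Φ_V(z) belongs to (n+1)·C_y. -/
open MeasureTheory Set Pointwise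

noncomputable section

section AuxGradientCone

open Real in
/-- `exp (-(c * ‖x‖))` is integrable on Euclidean space. -/
lemma aux_integrable_exp_neg_norm (d : ℕ) {c : ℝ} (hc : 0 < c) :
    Integrable (fun x : Euc d => Real.exp (-(c * ‖x‖))) := by
  have hnr : ((Module.finrank ℝ (Euc d) : ℝ)) < (d + 1 : ℝ) := by
    rw [finrank_euclideanSpace_fin]; norm_num
  set C : ℝ := Real.exp c * ((Nat.factorial (d+1) : ℝ)) / c ^ (d + 1) with hC
  refine ((integrable_one_add_norm (E := Euc d) (r := (d+1:ℝ)) hnr).const_mul C).mono'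
    ?_ ?_
  · exact (Real.continuous_exp.comp
      ((continuous_const.mul continuous_norm).neg)).aestronglyMeasurable
  · refine ae_of_all _ fun x => ?_
    have ht : (0:ℝ) ≤ ‖x‖ := norm_nonneg x
    have h1 : (0:ℝ) < 1 + ‖x‖ := by linarith
    have key : (c * (1 + ‖x‖)) ^ (d+1) / (Nat.factorial (d+1)) ≤ Real.exp (c * (1 + ‖x‖)) :=
      Real.pow_div_factorial_le_exp (x := c * (1 + ‖x‖)) (by positivity) (d+1)
    have hrpow : (1 + ‖x‖) ^ (-(d+1:ℝ)) = ((1 + ‖x‖) ^ (d+1 : ℕ))⁻¹ := by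
      rw [Real.rpow_neg h1.le]
      norm_cast
    rw [Real.norm_eq_abs, abs_of_pos (Real.exp_pos _), hrpow]
    have hpow : (0:ℝ) < (1 + ‖x‖) ^ (d+1 : ℕ) := by positivity
    have hf : (0:ℝ) < ((Nat.factorial (d+1)) : ℝ) := by positivity
    have hcp : (0:ℝ) < c ^ (d+1) := by positivity
    have hexp : Real.exp (-(c * ‖x‖)) = Real.exp c * (Real.exp (c * (1+‖x‖)))⁻¹ := by
      rw [← Real.exp_neg, ← Real.exp_add]; ring_nf
    rw [hexp, hC]
    rw [mul_pow] at key
    have h2 : (Real.exp (c * (1+‖x‖)))⁻¹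
        ≤ ((Nat.factorial (d+1)) : ℝ) / (c ^ (d+1) * (1 + ‖x‖) ^ (d+1)) := by
      rw [inv_le_iff_one_le_mul₀ (Real.exp_pos _), div_mul_eq_mul_div, le_div_iff₀ (by positivity)]
      calc (1:ℝ) * (c ^ (d+1) * (1 + ‖x‖) ^ (d+1)) = c ^ (d+1) * (1+‖x‖)^(d+1) := by ring
        _ ≤ Real.exp (c * (1+‖x‖)) * ((Nat.factorial (d+1)):ℝ) := by
            rw [div_le_iff₀ hf] at key; linarith
        _ = ((Nat.factorial (d+1)):ℝ) * Real.exp (c * (1+‖x‖)) := by ring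
    calc Real.exp c * (Real.exp (c * (1+‖x‖)))⁻¹
        ≤ Real.exp c * (((Nat.factorial (d+1)) : ℝ) / (c ^ (d+1) * (1 + ‖x‖) ^ (d+1))) := by
          exact mul_le_mul_of_nonneg_left h2 (Real.exp_pos c).le
      _ = Real.exp c * (Nat.factorial (d+1)) / c ^ (d+1) * ((1 + ‖x‖) ^ (d+1:ℕ))⁻¹ := by
          field_simp

lemma aux_integrableOn_exp_inner {d : ℕ} {V : Set (Euc d)} {z : Euc d}
    (hz : z ∈ interior (dualConeSet V)) (hVm : MeasurableSet V) :
    IntegrableOn (fun x : Euc d => Real.exp ((inner ℝ x z : ℝ))) V := by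
  obtain ⟨ε, hε, hball⟩ := Metric.mem_nhds_iff.1 (mem_interior_iff_mem_nhds.1 hz)
  have key : ∀ x ∈ V, (inner ℝ x z : ℝ) ≤ -(ε/2 * ‖x‖) := by
    intro x hx
    rcases eq_or_ne x 0 with rfl | hx0
    · simp
    · have hn : (0:ℝ) < ‖x‖ := norm_pos_iff.2 hx0
      have hu : z + (ε/2 * ‖x‖⁻¹) • x ∈ Metric.ball z ε := by
        rw [Metric.mem_ball, dist_eq_norm]
        simp only [add_sub_cancel_left, norm_smul]
        rw [Real.norm_eq_abs, abs_of_pos (by positivity)]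
        rw [mul_assoc, inv_mul_cancel₀ hn.ne', mul_one]
        linarith
      have := hball hu x hx
      rw [inner_add_right, real_inner_smul_right, real_inner_self_eq_norm_sq] at this
      have h2 : ε/2 * ‖x‖⁻¹ * ‖x‖^2 = ε/2 * ‖x‖ := by
        field_simp
      nlinarith
  refine ((aux_integrable_exp_neg_norm d (by linarith : (0:ℝ) < ε/2)).integrableOn).mono'
    (Real.continuous_exp.comp
      (continuous_id.inner continuous_const)).aestronglyMeasurable.restrict ?_
  refine (ae_restrict_iff' hVm).2 (ae_of_all _ fun x hx => ?_)
  rw [Real.norm_eq_abs, abs_of_pos (Real.exp_pos _)]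
  exact Real.exp_le_exp.2 (key x hx)

lemma aux_integral_exp_inner_pos {d : ℕ} {V : Set (Euc d)} {z : Euc d}
    (hVi : (interior V).Nonempty)
    (hI : IntegrableOn (fun x : Euc d => Real.exp ((inner ℝ x z : ℝ))) V) :
    0 < ∫ x in V, Real.exp ((inner ℝ x z : ℝ)) := by
  rw [setIntegral_pos_iff_support_of_nonneg_ae (ae_of_all _ fun x => (Real.exp_pos _).le) hI]
  have hsupp : Function.support (fun x : Euc d => Real.exp ((inner ℝ x z : ℝ))) = univ := by
    ext x; simp [Function.mem_support, (Real.exp_pos _).ne']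
  rw [hsupp, univ_inter]
  obtain ⟨p, hp⟩ := hVi
  calc (0:ENNReal) < volume (interior V) := isOpen_interior.measure_pos volume ⟨p, hp⟩
    _ ≤ volume V := measure_mono interior_subset

lemma aux_setIntegral_exp_le {d : ℕ} {V : Set (Euc d)} {z z' : Euc d}
    (hVm : MeasurableSet V)
    (hI : IntegrableOn (fun x : Euc d => Real.exp ((inner ℝ x z : ℝ))) V)
    (hle : ∀ x ∈ V, (inner ℝ x z' : ℝ) ≤ (inner ℝ x z : ℝ)) :
    IntegrableOn (fun x : Euc d => Real.exp ((inner ℝ x z' : ℝ))) V ∧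
      (∫ x in V, Real.exp ((inner ℝ x z' : ℝ))) ≤ ∫ x in V, Real.exp ((inner ℝ x z : ℝ)) := by
  have hint : IntegrableOn (fun x : Euc d => Real.exp ((inner ℝ x z' : ℝ))) V := by
    refine hI.mono' (Real.continuous_exp.comp
      (continuous_id.inner continuous_const)).aestronglyMeasurable.restrict ?_
    refine (ae_restrict_iff' hVm).2 (ae_of_all _ fun x hx => ?_)
    rw [Real.norm_eq_abs, abs_of_pos (Real.exp_pos _)]
    exact Real.exp_le_exp.2 (hle x hx)
  exact ⟨hint, setIntegral_mono_on hint hI hVm fun x hx => Real.exp_le_exp.2 (hle x hx)⟩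

lemma aux_deriv_nonpos_right {g : ℝ → ℝ} {a : ℝ} (hg : HasDerivAt g a 0)
    (h : ∀ t : ℝ, 0 < t → g t ≤ g 0) : a ≤ 0 := by
  have h1 : Filter.Tendsto (slope g 0) (nhdsWithin 0 (Set.Ioi 0)) (nhds a) :=
    (hasDerivAt_iff_tendsto_slope.1 hg).mono_left
      (nhdsWithin_mono 0 fun t ht => ne_of_gt ht)
  refine le_of_tendsto h1 ?_
  filter_upwards [self_mem_nhdsWithin] with t ht
  have ht' : (0:ℝ) < t := ht
  have hgt : g t - g 0 ≤ 0 := sub_nonpos.2 (h t ht')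
  rw [slope_def_field, div_nonpos_iff]
  right
  constructor
  · linarith
  · simp [ht'.le]

lemma aux_setIntegral_exp_smul {d : ℕ} {V : Set (Euc d)} (hVm : MeasurableSet V)
    (hVsmul : ∀ x ∈ V, ∀ t : ℝ, 0 ≤ t → t • x ∈ V) (z : Euc d) {t : ℝ} (ht : 0 < t) :
    (∫ x in V, Real.exp ((inner ℝ x (t • z) : ℝ)))
      = (t ^ d)⁻¹ * ∫ x in V, Real.exp ((inner ℝ x z : ℝ)) := by
  have hmem : ∀ x : Euc d, t • x ∈ V ↔ x ∈ V := by
    intro x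
    constructor
    · intro hx
      have := hVsmul _ hx t⁻¹ (by positivity)
      rwa [smul_smul, inv_mul_cancel₀ ht.ne', one_smul] at this
    · intro hx; exact hVsmul x hx t ht.le
  have hind : ∀ x : Euc d, V.indicator (fun x => Real.exp ((inner ℝ x (t • z) : ℝ))) x
      = V.indicator (fun x => Real.exp ((inner ℝ x z : ℝ))) (t • x) := by
    intro x
    by_cases hx : x ∈ V
    · rw [indicator_of_mem hx, indicator_of_mem ((hmem x).2 hx)]
      rw [real_inner_smul_right, real_inner_smul_left]
    · rw [indicator_of_notMem hx, indicator_of_notMem (fun h => hx ((hmem x).1 h))]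
  calc (∫ x in V, Real.exp ((inner ℝ x (t • z) : ℝ)))
      = ∫ x, V.indicator (fun x => Real.exp ((inner ℝ x (t • z) : ℝ))) x :=
        (integral_indicator hVm).symm
    _ = ∫ x, V.indicator (fun x => Real.exp ((inner ℝ x z : ℝ))) (t • x) := by
        simp_rw [hind]
    _ = |(t ^ Module.finrank ℝ (Euc d))⁻¹|
          • ∫ x, V.indicator (fun x => Real.exp ((inner ℝ x z : ℝ))) x :=
        MeasureTheory.Measure.integral_comp_smul volume _ t
    _ = (t ^ d)⁻¹ * ∫ x in V, Real.exp ((inner ℝ x z : ℝ)) := by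
        rw [integral_indicator hVm, finrank_euclideanSpace_fin, smul_eq_mul,
          abs_of_pos (by positivity)]

lemma aux_mem_of_forall_dual {d : ℕ} {V : Set (Euc d)} (hVcl : IsClosed V)
    (hconv : Convex ℝ V) (hVsmul : ∀ x ∈ V, ∀ t : ℝ, 0 ≤ t → t • x ∈ V)
    (h0 : (0:Euc d) ∈ V) {G : Euc d}
    (hG : ∀ w ∈ dualConeSet V, (inner ℝ G w : ℝ) ≤ 0) : G ∈ V := by
  set K : ConvexCone ℝ (Euc d) :=
    { carrier := V
      smul_mem' := fun c hc x hx => hVsmul x hx c hc.le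
      add_mem' := by
        intro x hx y hy
        have hmid : (1/2 : ℝ) • x + (1/2 : ℝ) • y ∈ V :=
          hconv hx hy (by norm_num) (by norm_num) (by norm_num)
        have := hVsmul _ hmid 2 (by norm_num)
        rwa [smul_add, smul_smul, smul_smul, (by norm_num : (2:ℝ) * (1/2) = 1),
          one_smul, one_smul] at this } with hK
  by_contra hGV
  obtain ⟨f, u, hfu, hux⟩ := geometric_hahn_banach_closed_point hconv hVcl hGV
  have hu0 : 0 < u := by simpa using hfu 0 h0
  have hfle : ∀ x ∈ V, f x ≤ 0 := by
    intro x hx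
    by_contra hpos
    push_neg at hpos
    have := hfu ((u / f x) • x) (hVsmul x hx _ (div_nonneg hu0.le hpos.le))
    rw [map_smul, smul_eq_mul, div_mul_cancel₀ _ hpos.ne'] at this
    exact lt_irrefl _ this
  have hwd : (InnerProductSpace.toDual ℝ (Euc d)).symm f ∈ dualConeSet V := by
    intro x hx
    rw [real_inner_comm, InnerProductSpace.toDual_symm_apply]
    exact hfle x hx
  have := hG _ hwd
  rw [real_inner_comm, InnerProductSpace.toDual_symm_apply] at this
  linarith

end AuxGradientCone

/-- `∇Φ_V(y + V*) ⊆ (n+1)·C_y`. -/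
theorem gradient_mapsTo_truncated_cone (n : ℕ) (V : Set (Euc (n + 1)))
    (hV : IsProperCone V) (y : Euc (n + 1)) (hy : y ∈ interior (dualConeSet V)) :
    ∀ z ∈ interior (dualConeSet V), z - y ∈ dualConeSet V →
      gradient (logLaplace V) z ∈ ((n : ℝ) + 1) • {x ∈ V | -1 ≤ (inner ℝ x y : ℝ)} := by
  intro z hz hzy
  obtain ⟨hVcl, hVconv, hVsmul, hVint, -⟩ := hV
  have hVm := hVcl.measurableSet
  have h0V : (0 : Euc (n+1)) ∈ V := by
    obtain ⟨p, hp⟩ := hVint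
    simpa using hVsmul p (interior_subset hp) 0 le_rfl
  by_cases hdiff : DifferentiableAt ℝ (logLaplace V) z
  case neg =>
    rw [gradient, fderiv_zero_of_not_differentiableAt hdiff]
    refine ⟨0, ⟨h0V, by simp⟩, by simp⟩
  case pos =>
  set G := gradient (logLaplace V) z with hGdef
  have hGw : ∀ w : Euc (n+1), (inner ℝ G w : ℝ) = fderiv ℝ (logLaplace V) z w := fun w => by
    rw [hGdef, gradient, InnerProductSpace.toDual_symm_apply]
  have hIz : IntegrableOn (fun x : Euc (n+1) => Real.exp ((inner ℝ x z : ℝ))) V :=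
    aux_integrableOn_exp_inner hz hVm
  have hJ : 0 < ∫ x in V, Real.exp ((inner ℝ x z : ℝ)) :=
    aux_integral_exp_inner_pos hVint hIz
  -- Claim 1: the gradient pairs nonpositively with every element of the dual cone
  have claim1 : ∀ w ∈ dualConeSet V, (inner ℝ G w : ℝ) ≤ 0 := by
    intro w hw
    have hcurve : HasDerivAt (fun t : ℝ => z + t • w) w 0 := by
      simpa using ((hasDerivAt_id (0:ℝ)).smul_const w).const_add z
    have hfd : HasFDerivAt (logLaplace V) (fderiv ℝ (logLaplace V) z) (z + (0:ℝ) • w) := by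
      rw [zero_smul, add_zero]; exact hdiff.hasFDerivAt
    have hder : HasDerivAt (fun t : ℝ => logLaplace V (z + t • w))
        (fderiv ℝ (logLaplace V) z w) 0 := by
      exact hfd.comp_hasDerivAt 0 hcurve
    have hmono : ∀ t : ℝ, 0 < t →
        (fun t : ℝ => logLaplace V (z + t • w)) t ≤ (fun t : ℝ => logLaplace V (z + t • w)) 0 := by
      intro t ht
      simp only [zero_smul, add_zero]
      have hle : ∀ x ∈ V, (inner ℝ x (z + t • w) : ℝ) ≤ (inner ℝ x z : ℝ) := by
        intro x hx
        rw [inner_add_right, real_inner_smul_right]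
        nlinarith [hw x hx]
      obtain ⟨hint', hle'⟩ := aux_setIntegral_exp_le hVm hIz hle
      have hpos' := aux_integral_exp_inner_pos hVint hint'
      exact Real.log_le_log hpos' hle'
    have := aux_deriv_nonpos_right hder hmono
    rw [hGw w]; exact this
  have hGV : G ∈ V := aux_mem_of_forall_dual hVcl hVconv hVsmul h0V claim1
  -- Euler identity : ⟪G, z⟫ = -(n+1)
  have hEuler : (inner ℝ G z : ℝ) = -((n:ℝ)+1) := by
    have hcurve : HasDerivAt (fun t : ℝ => t • z) z 1 := by
      simpa using (hasDerivAt_id (1:ℝ)).smul_const z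
    have hfd : HasFDerivAt (logLaplace V) (fderiv ℝ (logLaplace V) z) ((1:ℝ) • z) := by
      rw [one_smul]; exact hdiff.hasFDerivAt
    have h1 : HasDerivAt (fun t : ℝ => logLaplace V (t • z))
        (fderiv ℝ (logLaplace V) z z) 1 := by
      exact hfd.comp_hasDerivAt 1 hcurve
    have h2 : HasDerivAt (fun t : ℝ => logLaplace V z - ((n:ℝ)+1) * Real.log t)
        (-((n:ℝ)+1)) 1 := by
      have := ((Real.hasDerivAt_log one_ne_zero).const_mul ((n:ℝ)+1)).const_sub (logLaplace V z)
      simpa using this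
    have hEq : (fun t : ℝ => logLaplace V (t • z))
        =ᶠ[nhds 1] (fun t : ℝ => logLaplace V z - ((n:ℝ)+1) * Real.log t) := by
      filter_upwards [isOpen_Ioi.mem_nhds (show (0:ℝ) < 1 by norm_num)] with t ht
      have ht0 : (0:ℝ) < t := ht
      have hscale := aux_setIntegral_exp_smul hVm hVsmul z ht0
      have htpow : (0:ℝ) < (t ^ (n+1))⁻¹ := by positivity
      show logLaplace V (t • z) = logLaplace V z - ((n:ℝ)+1) * Real.log t
      rw [logLaplace, hscale, Real.log_mul htpow.ne' hJ.ne', Real.log_inv, Real.log_pow,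
        logLaplace]
      push_cast
      ring
    have h1' : HasDerivAt (fun t : ℝ => logLaplace V (t • z)) (-((n:ℝ)+1)) 1 :=
      h2.congr_of_eventuallyEq hEq
    have := h1.unique h1'
    rw [hGw z, this]
  -- Conclusion
  have hGzy : (inner ℝ G (z - y) : ℝ) ≤ 0 := hzy G hGV
  have hsub : (inner ℝ G (z - y) : ℝ) = (inner ℝ G z : ℝ) - (inner ℝ G y : ℝ) :=
    inner_sub_right _ _ _
  have hGy : -((n:ℝ)+1) ≤ (inner ℝ G y : ℝ) := by
    rw [hsub, hEuler] at hGzy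
    linarith
  have hcpos : (0:ℝ) < (n:ℝ)+1 := by positivity
  refine ⟨((n:ℝ)+1)⁻¹ • G, ⟨hVsmul G hGV ((n:ℝ)+1)⁻¹ (by positivity), ?_⟩, ?_⟩
  · rw [real_inner_smul_left]
    have h1 : (-1:ℝ) = ((n:ℝ)+1)⁻¹ * (-((n:ℝ)+1)) := by field_simp
    rw [h1]
    exact mul_le_mul_of_nonneg_left hGy (by positivity)
  · show ((n:ℝ)+1) • (((n:ℝ)+1)⁻¹ • G) = G
    rw [smul_smul, mul_inv_cancel₀ hcpos.ne', one_smul]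


end
end
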